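/- Let (a,b,c) ∈ ℂ³ with a+b+c = 0 and (a,b) ≠ (0,0); set u = a+(2−√3)b, v = (2−√3)a+b, N = |u|²+|v|², x = (|u|²−|v|²)/N and z = 2 Re(conj(u)·v)/N. Then: |a| = |b| if and only if x = 0; |b| = |c| if and only if x + √3·z = 0; and |a| = |c| if and only if x − √3·z = 0. Hence the three isosceles loci map onto three great circles of the unit sphere. -/

import Mathlib

/-- for side vectors `(a,b,c)` with `a+b+c = 0`, `(a,b) ≠ (0,0)`,
`u = a+(2−√3)b`, `v = (2−√3)a+b`, `N = |u|²+|v|²`, `x = (|u|²−|v|²)/N`,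
`z = 2Re(ūv)/N`: `|a| = |b|` iff `x = 0`; `|b| = |c|` iff `x+√3z = 0`; and
`|a| = |c|` iff `x−√3z = 0`. Hence the three isosceles loci map onto three great
circles of the unit sphere. -/
theorem stmt14 (a b c : ℂ) (hsum : a + b + c = 0) (hab : (a, b) ≠ (0, 0))
    (u v : ℂ) (hu : u = a + (2 - (Real.sqrt 3 : ℂ)) * b)
    (hv : v = (2 - (Real.sqrt 3 : ℂ)) * a + b)
    (N x z : ℝ) (hN : N = Complex.normSq u + Complex.normSq v)
    (hx : x = (Complex.normSq u - Complex.normSq v) / N)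
    (hz : z = 2 * (star u * v).re / N) :
    (‖a‖ = ‖b‖ ↔ x = 0) ∧
    (‖b‖ = ‖c‖ ↔ x + Real.sqrt 3 * z = 0) ∧
    (‖a‖ = ‖c‖ ↔ x - Real.sqrt 3 * z = 0) := by
  set s := Real.sqrt 3 with hsdef
  have hs : s * s = 3 := Real.mul_self_sqrt (by norm_num)
  have hspos : (1.7:ℝ) < s := by
    rw [hsdef]
    exact (Real.lt_sqrt (by norm_num)).mpr (by norm_num)
  have hsC : (s:ℂ) * (s:ℂ) = 3 := by exact_mod_cast congrArg (Complex.ofReal) hs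
  have hc : c = -a - b := by linear_combination hsum
  have hco : (((4*s-6 : ℝ)) : ℂ) ≠ 0 := by
    simp only [ne_eq, Complex.ofReal_eq_zero]; nlinarith
  -- N is positive
  have hNpos : 0 < N := by
    rcases (lt_or_eq_of_le (add_nonneg (Complex.normSq_nonneg u) (Complex.normSq_nonneg v))) with h | h
    · rw [hN]; exact h
    · exfalso
      have hu0 : u = 0 := Complex.normSq_eq_zero.mp (by nlinarith [Complex.normSq_nonneg u, Complex.normSq_nonneg v])
      have hv0 : v = 0 := Complex.normSq_eq_zero.mp (by nlinarith [Complex.normSq_nonneg u, Complex.normSq_nonneg v])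
      have ha0 : a = 0 := by
        have key : (((4*s-6:ℝ)):ℂ) * a = u - (2-(s:ℂ))*v := by
          rw [hu, hv]; push_cast; linear_combination a * hsC
        rw [hu0, hv0] at key; simp only [mul_zero, sub_zero] at key
        exact (mul_eq_zero.mp key).resolve_left hco
      have hb0 : b = 0 := by
        have key : (((4*s-6:ℝ)):ℂ) * b = v - (2-(s:ℂ))*u := by
          rw [hu, hv]; push_cast; linear_combination b * hsC
        rw [hu0, hv0] at key; simp only [mul_zero, sub_zero] at key
        exact (mul_eq_zero.mp key).resolve_left hco
      exact hab (by simp [ha0, hb0])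
  have hN0 : N ≠ 0 := ne_of_gt hNpos
  have h46 : (4*s-6 : ℝ) ≠ 0 := by nlinarith
  have h812 : (8*s-12 : ℝ) ≠ 0 := by nlinarith
  have hn812 : (-(8*s-12) : ℝ) ≠ 0 := neg_ne_zero.mpr h812
  -- key identities
  have h1 : Complex.normSq u - Complex.normSq v
      = (4*s-6) * (Complex.normSq a - Complex.normSq b) := by
    rw [hu, hv]
    simp only [Complex.normSq_apply, Complex.add_re, Complex.add_im, Complex.mul_re,
      Complex.mul_im, Complex.sub_re, Complex.sub_im, Complex.ofReal_re, Complex.ofReal_im,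
      Complex.re_ofNat, Complex.im_ofNat]
    linear_combination (b.re^2 + b.im^2 - a.re^2 - a.im^2) * hs
  have h2 : (Complex.normSq u - Complex.normSq v) + s * (2 * (star u * v).re)
      = (8*s-12) * (Complex.normSq a + 2 * (star a * b).re) := by
    rw [hu, hv]
    simp only [Complex.normSq_apply, Complex.add_re, Complex.add_im, Complex.mul_re,
      Complex.mul_im, Complex.sub_re, Complex.sub_im, Complex.ofReal_re, Complex.ofReal_im,
      Complex.re_ofNat, Complex.im_ofNat, Complex.star_def, Complex.conj_re, Complex.conj_im]
    linear_combination (-3*(a.re^2+a.im^2) - (b.re^2+b.im^2) + (2*s-8)*(a.re*b.re+a.im*b.im)) * hs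
  have h3 : (Complex.normSq u - Complex.normSq v) - s * (2 * (star u * v).re)
      = -(8*s-12) * (Complex.normSq b + 2 * (star a * b).re) := by
    rw [hu, hv]
    simp only [Complex.normSq_apply, Complex.add_re, Complex.add_im, Complex.mul_re,
      Complex.mul_im, Complex.sub_re, Complex.sub_im, Complex.ofReal_re, Complex.ofReal_im,
      Complex.re_ofNat, Complex.im_ofNat, Complex.star_def, Complex.conj_re, Complex.conj_im]
    linear_combination ((a.re^2+a.im^2) + 3*(b.re^2+b.im^2) - (2*s-8)*(a.re*b.re+a.im*b.im)) * hs
  have hCn : Complex.normSq c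
      = Complex.normSq a + Complex.normSq b + 2 * (star a * b).re := by
    rw [hc]
    simp only [Complex.normSq_apply, Complex.sub_re, Complex.sub_im, Complex.neg_re,
      Complex.neg_im, Complex.mul_re, Complex.star_def, Complex.conj_re, Complex.conj_im]
    ring
  have habs : ∀ w w' : ℂ, ‖w‖ = ‖w'‖ ↔ Complex.normSq w = Complex.normSq w' := by
    intro w w'
    rw [Complex.normSq_eq_norm_sq, Complex.normSq_eq_norm_sq]
    exact (sq_eq_sq₀ (norm_nonneg w) (norm_nonneg w')).symm
  refine ⟨?_, ?_, ?_⟩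
  · rw [habs, hx, div_eq_zero_iff, or_iff_left hN0, h1, mul_eq_zero, or_iff_right h46,
      sub_eq_zero]
  · have hxz : x + s * z = ((Complex.normSq u - Complex.normSq v) + s * (2 * (star u * v).re)) / N := by
      rw [hx, hz]; ring
    rw [habs, hxz, h2, div_eq_zero_iff, or_iff_left hN0, mul_eq_zero, or_iff_right h812, hCn]
    constructor <;> intro h <;> linarith
  · have hxz : x - s * z = ((Complex.normSq u - Complex.normSq v) - s * (2 * (star u * v).re)) / N := by
      rw [hx, hz]; ring
    rw [habs, hxz, h3, div_eq_zero_iff, or_iff_left hN0, mul_eq_zero, or_iff_right hn812, hCn]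
    constructor <;> intro h <;> linarith
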